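/- In the parallel composition extended with wildcard receives, an SR* action (a send matched with a wildcard receive) enabled at a global state σ can be disabled by executing another action enabled at σ only if that other action is also an SR* action sharing the same wildcard-receiving process; in particular, non-wildcard SR actions and B actions never disable any co-enabled SR* action. -/
import Mathlib


/-- Local actions of an MPI process: send to a specific destination, receive
from a specific source, wildcard receive (from any source), or barrier. -/
inductive WAct (n : ℕ) where
  | send (dest : Fin n)
  | recv (src : Fin n)
  | recvAny
  | barrier
deriving DecidableEq

/-- Global actions of the parallel composition with wildcard receives:
`B` (global barrier), `SR i j` (send from `i` matched with the specific
receive at `j`), and `SRW i j` (send from `i` matched with the wildcard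
receive at `j`). -/
inductive WGAct (n : ℕ) where
  | B
  | SR (i j : Fin n)
  | SRW (i j : Fin n)
deriving DecidableEq

variable {n : ℕ} {L : Fin n → Type}

/-- Enabledness of global actions in a global state `σ` (an `n`-tuple of local
states), where `next i` gives the unique next local action of deterministic
process `i` (`none` = terminated). -/
def WEnabled (next : ∀ i, L i → Option (WAct n)) (σ : ∀ i, L i) : WGAct n → Prop
  | .B => ∀ i, next i (σ i) = some .barrier
  | .SR i j => i ≠ j ∧ next i (σ i) = some (.send j) ∧ next j (σ j) = some (.recv i)
  | .SRW i j => i ≠ j ∧ next i (σ i) = some (.send j) ∧ next j (σ j) = some .recvAny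

open scoped Classical in
/-- The global step function: `B` advances all components, while `SR i j` and
`SRW i j` advance exactly components `i` and `j`. -/
noncomputable def wstep (next : ∀ i, L i → Option (WAct n)) (adv : ∀ i, L i → L i) :
    WGAct n → (∀ i, L i) → Option (∀ i, L i)
  | .B, σ => if WEnabled next σ .B then some (fun k => adv k (σ k)) else none
  | .SR i j, σ =>
      if WEnabled next σ (.SR i j) then
        some (Function.update (Function.update σ i (adv i (σ i))) j (adv j (σ j)))
      else none
  | .SRW i j, σ =>
      if WEnabled next σ (.SRW i j) then
        some (Function.update (Function.update σ i (adv i (σ i))) j (adv j (σ j)))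
      else none

/-- an `SRW i j` action (send matched with a wildcard receive at
`j`) enabled at `σ` can be disabled by executing another action enabled at `σ`
only if that action is also an `SRW` action with the same wildcard-receiving
process `j`; in particular, non-wildcard `SR` actions and `B` never disable a
co-enabled `SRW` action. -/
theorem stmt13 (next : ∀ i, L i → Option (WAct n)) (adv : ∀ i, L i → L i)
    (σ : ∀ i, L i) (i j : Fin n) (g : WGAct n)
    (hsrw : WEnabled next σ (.SRW i j))
    (hg : WEnabled next σ g)
    (hdisable : ∃ σ', wstep next adv g σ = some σ' ∧ ¬ WEnabled next σ' (.SRW i j)) :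
    ∃ i' : Fin n, g = .SRW i' j := by
  obtain ⟨hne, hsend, hrecv⟩ := hsrw
  obtain ⟨σ', hstep, hdis⟩ := hdisable
  cases g with
  | B =>
    exfalso
    have := hg i
    rw [hsend] at this
    simp at this
  | SR i' j' =>
    exfalso
    obtain ⟨hne', hsend', hrecv'⟩ := hg
    -- distinctness
    have hi'i : i' ≠ i := by
      rintro rfl
      rw [hsend'] at hsend
      injection hsend with h
      injection h with h
      subst h
      rw [hrecv'] at hrecv
      simp at hrecv
    have hi'j : i' ≠ j := by
      rintro rfl
      rw [hsend'] at hrecv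
      simp at hrecv
    have hj'i : j' ≠ i := by
      rintro rfl
      rw [hrecv'] at hsend
      simp at hsend
    have hj'j : j' ≠ j := by
      rintro rfl
      rw [hrecv'] at hrecv
      simp at hrecv
    simp only [wstep, if_pos (show WEnabled next σ (.SR i' j') from ⟨hne', hsend', hrecv'⟩)]
      at hstep
    injection hstep with h
    subst h
    exact hdis ⟨hne, by
      rw [Function.update_of_ne hj'i.symm, Function.update_of_ne hi'i.symm]; exact hsend, by
      rw [Function.update_of_ne hj'j.symm, Function.update_of_ne hi'j.symm]; exact hrecv⟩
  | SRW i' j' =>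
    refine ⟨i', ?_⟩
    obtain ⟨hne', hsend', hrecv'⟩ := hg
    by_cases hjj : j' = j
    · subst hjj; rfl
    exfalso
    have hi'i : i' ≠ i := by
      rintro rfl
      rw [hsend'] at hsend
      injection hsend with h
      injection h with h
      exact hjj h
    have hi'j : i' ≠ j := by
      rintro rfl
      rw [hsend'] at hrecv
      simp at hrecv
    have hj'i : j' ≠ i := by
      rintro rfl
      rw [hrecv'] at hsend
      simp at hsend
    simp only [wstep, if_pos (show WEnabled next σ (.SRW i' j') from ⟨hne', hsend', hrecv'⟩)]
      at hstep
    injection hstep with h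
    subst h
    exact hdis ⟨hne, by
      rw [Function.update_of_ne hj'i.symm, Function.update_of_ne hi'i.symm]; exact hsend, by
      rw [Function.update_of_ne (Ne.symm hjj), Function.update_of_ne hi'j.symm]; exact hrecv⟩
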